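/- Let a ≥ 2 be an integer and p ∈ (0,1) with q = 1 − p. Let z₁ ∈ {1,…,a−1}, z₂ = a − z₁, r = (q/p)^{a/2 − z₁}, and define π₁ = r/(1+r), π₂ = 1/(1+r). Then π₁ + π₂ = 1, π₁/π₂ = r, and for every γ ∈ (0,1): π₁·u(z₁;γ) + π₂·u(z₂;γ) = C*·(π₁·s(z₁;γ) + π₂·s(z₂;γ)), where C* = (q/p)^{a/2}/(1 + (q/p)^{a/2}). Moreover (π₁, π₂) is the unique pair of nonnegative reals summing to 1 with ratio π₁/π₂ = r. -/

import Mathlib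

/-- Eigenvalue `λ_ν = 2√(p(1−p))·cos(πν/a)`. -/
noncomputable def lam (a : ℕ) (p : ℝ) (ν : ℕ) : ℝ :=
  2 * Real.sqrt (p * (1 - p)) * Real.cos (Real.pi * ν / a)

/-- Spectral transfer function `f_ν(γ) = λ_ν(1−γ)/(1 − λ_ν(1−γ))`. -/
noncomputable def fer (a : ℕ) (p : ℝ) (ν : ℕ) (γ : ℝ) : ℝ :=
  lam a p ν * (1 - γ) / (1 - lam a p ν * (1 - γ))

/-- Spectral coefficient `A_ν(w) = (2/a)·(q/p)^{w/2}·sin(πνw/a)·sin(πν/a)`. -/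
noncomputable def Acoef (a : ℕ) (p : ℝ) (ν w : ℕ) : ℝ :=
  (2 / a) * ((1 - p) / p) ^ ((w : ℝ) / 2) *
    Real.sin (Real.pi * ν * w / a) * Real.sin (Real.pi * ν / a)

/-- Spectral coefficient `B_ν(w) = (2/a)·(p/q)^{(a−w)/2}·sin(πν(a−w)/a)·sin(πν/a)`. -/
noncomputable def Bcoef (a : ℕ) (p : ℝ) (ν w : ℕ) : ℝ :=
  (2 / a) * (p / (1 - p)) ^ (((a : ℝ) - w) / 2) *
    Real.sin (Real.pi * ν * ((a : ℝ) - w) / a) * Real.sin (Real.pi * ν / a)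

/-- Discounted first-cycle ruin probability `u(z;γ) = Σ_ν A_ν(z)·f_ν(γ)`. -/
noncomputable def usum (a : ℕ) (p : ℝ) (z : ℕ) (γ : ℝ) : ℝ :=
  ∑ ν ∈ Finset.Icc 1 (a - 1), Acoef a p ν z * fer a p ν γ

/-- Discounted first-cycle absorption probability
`s(z;γ) = Σ_ν (A_ν(z)+B_ν(z))·f_ν(γ)`. -/
noncomputable def ssum (a : ℕ) (p : ℝ) (z : ℕ) (γ : ℝ) : ℝ :=
  ∑ ν ∈ Finset.Icc 1 (a - 1), (Acoef a p ν z + Bcoef a p ν z) * fer a p ν γ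

/-- Key termwise coefficient identity. -/
lemma coef_key (a : ℕ) (ha : 2 ≤ a) (p : ℝ) (hp0 : 0 < p) (hp1 : p < 1)
    (z₁ : ℕ) (hz1 : 1 ≤ z₁) (hz2 : z₁ ≤ a - 1) (ν : ℕ) :
    (((1 - p) / p) ^ ((a : ℝ) / 2 - z₁) / (1 + ((1 - p) / p) ^ ((a : ℝ) / 2 - z₁))) *
          Acoef a p ν z₁
        + (1 / (1 + ((1 - p) / p) ^ ((a : ℝ) / 2 - z₁))) * Acoef a p ν (a - z₁)
      = (((1 - p) / p) ^ ((a : ℝ) / 2) / (1 + ((1 - p) / p) ^ ((a : ℝ) / 2))) *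
        ((((1 - p) / p) ^ ((a : ℝ) / 2 - z₁) / (1 + ((1 - p) / p) ^ ((a : ℝ) / 2 - z₁))) *
            (Acoef a p ν z₁ + Bcoef a p ν z₁)
          + (1 / (1 + ((1 - p) / p) ^ ((a : ℝ) / 2 - z₁))) *
            (Acoef a p ν (a - z₁) + Bcoef a p ν (a - z₁))) := by
  have hρ : (0 : ℝ) < (1 - p) / p := div_pos (by linarith) hp0
  set ρ : ℝ := (1 - p) / p with hρdef
  have hza : z₁ ≤ a := hz2.trans (Nat.sub_le a 1)
  have hcast : ((a - z₁ : ℕ) : ℝ) = (a : ℝ) - z₁ := Nat.cast_sub hza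
  have ha0 : (a : ℝ) ≠ 0 := by positivity
  set X : ℝ := ρ ^ ((z₁ : ℝ) / 2) with hXdef
  set R : ℝ := ρ ^ ((a : ℝ) / 2) with hRdef
  have hX : 0 < X := Real.rpow_pos_of_pos hρ _
  have hR : 0 < R := Real.rpow_pos_of_pos hρ _
  have hinv : p / (1 - p) = ρ⁻¹ := by rw [hρdef, inv_div]
  have e1 : ρ ^ (((a : ℝ) - z₁) / 2) = R / X := by
    rw [eq_div_iff hX.ne', hXdef, hRdef, ← Real.rpow_add hρ]
    congr 1; ring
  have e2 : (p / (1 - p)) ^ (((a : ℝ) - z₁) / 2) = X / R := by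
    rw [hinv, Real.inv_rpow hρ.le, e1, inv_div]
  have e3 : (p / (1 - p)) ^ ((z₁ : ℝ) / 2) = 1 / X := by
    rw [hinv, Real.inv_rpow hρ.le, ← hXdef, one_div]
  have e4 : ρ ^ ((a : ℝ) / 2 - z₁) = R / (X * X) := by
    rw [eq_div_iff (by positivity), hXdef, hRdef, ← Real.rpow_add hρ, ← Real.rpow_add hρ]
    congr 1; ring
  have harg : Real.pi * ν * ((a : ℝ) - z₁) / a = ν * Real.pi - Real.pi * ν * z₁ / a := by
    field_simp
  have hsin : Real.sin (Real.pi * ν * ((a : ℝ) - z₁) / a)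
      = -((-1 : ℝ) ^ ν * Real.sin (Real.pi * ν * z₁ / a)) := by
    rw [harg, Real.sin_nat_mul_pi_sub]
  have hsub : (a : ℝ) - ((a : ℝ) - (z₁ : ℝ)) = (z₁ : ℝ) := by ring
  unfold Acoef Bcoef
  rw [hcast, hsub, e1, e2, e3, e4, hsin]
  set S : ℝ := Real.sin (Real.pi * ν * z₁ / a)
  set T : ℝ := Real.sin (Real.pi * ν / a)
  set ε : ℝ := (-1 : ℝ) ^ ν
  have hX' : X ≠ 0 := hX.ne'
  have hR' : R ≠ 0 := hR.ne'
  have h1 : (0:ℝ) < 1 + R / (X * X) := by positivity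
  have h2 : (0:ℝ) < 1 + R := by positivity
  field_simp
  ring

/-- the two-site critical reset distribution on symmetric sites
`z₁` and `z₂ = a − z₁`: `π₁ = r/(1+r)`, `π₂ = 1/(1+r)` with
`r = (q/p)^{a/2−z₁}` is the unique nonnegative pair summing to 1 with ratio
`r`, and it makes the coupling constant equal to `C*` for every `γ`. -/
theorem stmt_16 (a : ℕ) (ha : 2 ≤ a) (p : ℝ) (hp : p ∈ Set.Ioo (0 : ℝ) 1)
    (z₁ : ℕ) (hz₁ : z₁ ∈ Finset.Icc 1 (a - 1)) :
    let r : ℝ := (((1 - p) / p) ^ ((a : ℝ) / 2 - z₁) : ℝ)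
    let π₁ : ℝ := r / (1 + r)
    let π₂ : ℝ := 1 / (1 + r)
    let Cstar : ℝ := ((1 - p) / p) ^ ((a : ℝ) / 2) / (1 + ((1 - p) / p) ^ ((a : ℝ) / 2))
    π₁ + π₂ = 1 ∧ π₁ / π₂ = r ∧
    (∀ γ ∈ Set.Ioo (0 : ℝ) 1,
      π₁ * usum a p z₁ γ + π₂ * usum a p (a - z₁) γ =
        Cstar * (π₁ * ssum a p z₁ γ + π₂ * ssum a p (a - z₁) γ)) ∧
    (∀ x y : ℝ, 0 ≤ x → 0 ≤ y → x + y = 1 → x / y = r → x = π₁ ∧ y = π₂) := by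
  intro r π₁ π₂ Cstar
  obtain ⟨hp0, hp1⟩ := hp
  obtain ⟨hz1, hz2⟩ := Finset.mem_Icc.mp hz₁
  have hρ : (0 : ℝ) < (1 - p) / p := div_pos (by linarith) hp0
  have hr : 0 < r := Real.rpow_pos_of_pos hρ _
  have h1r : (0:ℝ) < 1 + r := by linarith
  refine ⟨?_, ?_, ?_, ?_⟩
  · show r / (1 + r) + 1 / (1 + r) = 1
    field_simp
    ring
  · show (r / (1 + r)) / (1 / (1 + r)) = r
    rw [div_div_eq_mul_div, div_one, div_mul_cancel₀ r h1r.ne']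
  · intro γ _
    show r / (1 + r) * usum a p z₁ γ + 1 / (1 + r) * usum a p (a - z₁) γ =
      Cstar * (r / (1 + r) * ssum a p z₁ γ + 1 / (1 + r) * ssum a p (a - z₁) γ)
    unfold usum ssum
    rw [Finset.mul_sum, Finset.mul_sum, Finset.mul_sum, Finset.mul_sum,
      ← Finset.sum_add_distrib, ← Finset.sum_add_distrib, Finset.mul_sum]
    refine Finset.sum_congr rfl fun ν _ => ?_
    have h := coef_key a ha p hp0 hp1 z₁ hz1 hz2 ν
    calc r / (1 + r) * (Acoef a p ν z₁ * fer a p ν γ)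
          + 1 / (1 + r) * (Acoef a p ν (a - z₁) * fer a p ν γ)
        = (r / (1 + r) * Acoef a p ν z₁ + 1 / (1 + r) * Acoef a p ν (a - z₁)) *
            fer a p ν γ := by ring
      _ = (Cstar * (r / (1 + r) * (Acoef a p ν z₁ + Bcoef a p ν z₁)
            + 1 / (1 + r) * (Acoef a p ν (a - z₁) + Bcoef a p ν (a - z₁)))) *
            fer a p ν γ := by rw [h]
      _ = Cstar * (r / (1 + r) * ((Acoef a p ν z₁ + Bcoef a p ν z₁) * fer a p ν γ)
            + 1 / (1 + r) * ((Acoef a p ν (a - z₁) + Bcoef a p ν (a - z₁)) * fer a p ν γ)) := by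
          ring
  · intro x y hx hy hsum hrat
    have hy0 : y ≠ 0 := by
      rintro rfl
      rw [div_zero] at hrat
      exact hr.ne hrat
    have hx' : x = r * y := by
      rw [div_eq_iff hy0] at hrat; linarith [hrat]
    have hy' : y = 1 / (1 + r) := by
      rw [eq_div_iff h1r.ne']
      nlinarith
    constructor
    · show x = r / (1 + r)
      rw [hx', hy']; ring
    · exact hy'
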